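/- arXiv:1601.06376 — 5 statements merged into one kernel-verified Lean document; each statement's English description precedes it below -/
import Mathlib

section
/- The optimization problem (P2) with linear objective ∑_{n=2}^N R_r[n], constraints ∑_{i=2}^n R_r[i] ≤ ∑_{i=1}^{n-1} log₂(1 + p_s[i]·γ_SR[i]) for all n, R_r[n] ≤ log₂(1 + p_r[n]·γ_RD[n]), power sum constraints ∑ p_s[n] ≤ E_s, ∑ p_r[n] ≤ E_r, and nonnegativity, has the same optimal value as the problem (P1) obtained by replacing each R_r[n] with log₂(1 + p_r[n]·γ_RD[n]) in both objective and causality constraints. In particular every optimal solution of (P2) can be modified (by decreasing some p_r[n]) to one where all rate constraints R_r[n] ≤ log₂(1+p_r[n]γ_RD[n]) hold with equality. -/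
open Finset Real

/-- Feasibility for problem (P1). -/
def P1Feas (N : ℕ) (γSR γRD : ℕ → ℝ) (Es Er : ℝ) (ps pr : ℕ → ℝ) : Prop :=
  (∀ n ∈ Finset.Icc 1 (N - 1), 0 ≤ ps n) ∧
  (∀ n ∈ Finset.Icc 2 N, 0 ≤ pr n) ∧
  (∑ n ∈ Finset.Icc 1 (N - 1), ps n) ≤ Es ∧
  (∑ n ∈ Finset.Icc 2 N, pr n) ≤ Er ∧
  (∀ n ∈ Finset.Icc 2 N,
    (∑ i ∈ Finset.Icc 2 n, Real.logb 2 (1 + pr i * γRD i)) ≤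
      ∑ i ∈ Finset.Icc 1 (n - 1), Real.logb 2 (1 + ps i * γSR i))

/-- Objective of problem (P1). -/
noncomputable def P1Obj (N : ℕ) (γRD : ℕ → ℝ) (pr : ℕ → ℝ) : ℝ :=
  ∑ n ∈ Finset.Icc 2 N, Real.logb 2 (1 + pr n * γRD n)

/-- Feasibility for problem (P2), with slack rate variables `Rr`. -/
def P2Feas (N : ℕ) (γSR γRD : ℕ → ℝ) (Es Er : ℝ) (ps pr Rr : ℕ → ℝ) : Prop :=
  (∀ n ∈ Finset.Icc 1 (N - 1), 0 ≤ ps n) ∧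
  (∀ n ∈ Finset.Icc 2 N, 0 ≤ pr n) ∧
  (∀ n ∈ Finset.Icc 2 N, 0 ≤ Rr n) ∧
  (∑ n ∈ Finset.Icc 1 (N - 1), ps n) ≤ Es ∧
  (∑ n ∈ Finset.Icc 2 N, pr n) ≤ Er ∧
  (∀ n ∈ Finset.Icc 2 N, Rr n ≤ Real.logb 2 (1 + pr n * γRD n)) ∧
  (∀ n ∈ Finset.Icc 2 N,
    (∑ i ∈ Finset.Icc 2 n, Rr i) ≤
      ∑ i ∈ Finset.Icc 1 (n - 1), Real.logb 2 (1 + ps i * γSR i))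

lemma key_mod (N : ℕ) (γSR γRD : ℕ → ℝ)
    (hRD : ∀ n ∈ Finset.Icc 2 N, 0 < γRD n) (Es Er : ℝ) (ps pr Rr : ℕ → ℝ)
    (h : P2Feas N γSR γRD Es Er ps pr Rr) :
    ∃ pr', (∀ n ∈ Finset.Icc 2 N, pr' n ≤ pr n) ∧
      P2Feas N γSR γRD Es Er ps pr' Rr ∧
      (∀ n ∈ Finset.Icc 2 N, Rr n = Real.logb 2 (1 + pr' n * γRD n)) := by
  obtain ⟨hps, hpr, hRr, hEs', hEr', hrate, hcaus⟩ := h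
  set pr' : ℕ → ℝ := fun n =>
    if n ∈ Finset.Icc 2 N then ((2:ℝ) ^ (Rr n) - 1) / γRD n else pr n with hpr'def
  have hkey : ∀ n ∈ Finset.Icc 2 N,
      pr' n * γRD n = (2:ℝ) ^ (Rr n) - 1 ∧ 0 ≤ pr' n ∧ pr' n ≤ pr n ∧
        Real.logb 2 (1 + pr' n * γRD n) = Rr n := by
    intro n hn
    have hγ := hRD n hn
    have hx : (0:ℝ) < 1 + pr n * γRD n := by
      have := mul_nonneg (hpr n hn) hγ.le; linarith
    have h2 : (2:ℝ) ^ (Rr n) ≤ 1 + pr n * γRD n := by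
      calc (2:ℝ) ^ (Rr n) ≤ (2:ℝ) ^ (Real.logb 2 (1 + pr n * γRD n)) :=
              Real.rpow_le_rpow_of_exponent_le one_le_two (hrate n hn)
        _ = 1 + pr n * γRD n := Real.rpow_logb (by norm_num) (by norm_num) hx
    have hone : (1:ℝ) ≤ (2:ℝ) ^ (Rr n) := by
      calc (1:ℝ) = (2:ℝ) ^ (0:ℝ) := (Real.rpow_zero 2).symm
        _ ≤ (2:ℝ) ^ (Rr n) := Real.rpow_le_rpow_of_exponent_le one_le_two (hRr n hn)
    have heq : pr' n * γRD n = (2:ℝ) ^ (Rr n) - 1 := by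
      simp only [hpr'def, if_pos hn]
      field_simp
    refine ⟨heq, ?_, ?_, ?_⟩
    · simp only [hpr'def, if_pos hn]
      exact div_nonneg (by linarith) hγ.le
    · simp only [hpr'def, if_pos hn]
      rw [div_le_iff₀ hγ]; linarith
    · rw [heq]
      have : (1:ℝ) + ((2:ℝ) ^ (Rr n) - 1) = (2:ℝ) ^ (Rr n) := by ring
      rw [this, Real.logb_rpow (by norm_num) (by norm_num)]
  refine ⟨pr', fun n hn => (hkey n hn).2.2.1, ⟨hps, fun n hn => (hkey n hn).2.1, hRr, hEs', ?_,
    fun n hn => le_of_eq ((hkey n hn).2.2.2).symm, hcaus⟩, fun n hn => ((hkey n hn).2.2.2).symm⟩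
  calc (∑ n ∈ Finset.Icc 2 N, pr' n) ≤ ∑ n ∈ Finset.Icc 2 N, pr n :=
        Finset.sum_le_sum fun n hn => (hkey n hn).2.2.1
    _ ≤ Er := hEr'

lemma P1_of_mod (N : ℕ) (γSR γRD : ℕ → ℝ) (Es Er : ℝ) (ps pr' Rr : ℕ → ℝ)
    (h : P2Feas N γSR γRD Es Er ps pr' Rr)
    (heq : ∀ n ∈ Finset.Icc 2 N, Rr n = Real.logb 2 (1 + pr' n * γRD n)) :
    P1Feas N γSR γRD Es Er ps pr' ∧ P1Obj N γRD pr' = ∑ n ∈ Finset.Icc 2 N, Rr n := by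
  obtain ⟨hps, hpr, hRr, hEs', hEr', hrate, hcaus⟩ := h
  constructor
  · refine ⟨hps, hpr, hEs', hEr', fun n hn => ?_⟩
    have hsub : ∀ i ∈ Finset.Icc 2 n, i ∈ Finset.Icc 2 N := by
      intro i hi
      simp only [Finset.mem_Icc] at *
      exact ⟨hi.1, hi.2.trans hn.2⟩
    calc (∑ i ∈ Finset.Icc 2 n, Real.logb 2 (1 + pr' i * γRD i))
        = ∑ i ∈ Finset.Icc 2 n, Rr i :=
          Finset.sum_congr rfl fun i hi => (heq i (hsub i hi)).symm
      _ ≤ _ := hcaus n hn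
  · unfold P1Obj
    exact Finset.sum_congr rfl fun n hn => (heq n hn).symm

/-- (P1) and (P2) have the same optimal value, and every optimal solution of (P2)
can be turned, by decreasing relay powers, into one where all rate constraints
hold with equality. -/
theorem stmt_0 (N : ℕ) (hN : 2 ≤ N) (γSR γRD : ℕ → ℝ)
    (hSR : ∀ n ∈ Finset.Icc 1 (N - 1), 0 < γSR n)
    (hRD : ∀ n ∈ Finset.Icc 2 N, 0 < γRD n)
    (Es Er : ℝ) (hEs : 0 ≤ Es) (hEr : 0 ≤ Er) :
    sSup {v : ℝ | ∃ ps pr, P1Feas N γSR γRD Es Er ps pr ∧ v = P1Obj N γRD pr} =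
      sSup {v : ℝ | ∃ ps pr Rr, P2Feas N γSR γRD Es Er ps pr Rr ∧
        v = ∑ n ∈ Finset.Icc 2 N, Rr n} ∧
    (∀ ps pr Rr, P2Feas N γSR γRD Es Er ps pr Rr →
      (∀ ps' pr' Rr', P2Feas N γSR γRD Es Er ps' pr' Rr' →
        (∑ n ∈ Finset.Icc 2 N, Rr' n) ≤ ∑ n ∈ Finset.Icc 2 N, Rr n) →
      ∃ pr', (∀ n ∈ Finset.Icc 2 N, pr' n ≤ pr n) ∧
        P2Feas N γSR γRD Es Er ps pr' Rr ∧
        (∀ n ∈ Finset.Icc 2 N, Rr n = Real.logb 2 (1 + pr' n * γRD n))) := by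
  constructor
  · congr 1
    ext v
    simp only [Set.mem_setOf_eq]
    constructor
    · rintro ⟨ps, pr, ⟨hps, hpr, hEs', hEr', hcaus⟩, rfl⟩
      refine ⟨ps, pr, fun n => Real.logb 2 (1 + pr n * γRD n),
        ⟨hps, hpr, fun n hn => ?_, hEs', hEr', fun n hn => le_rfl, hcaus⟩, rfl⟩
      have hx : (1:ℝ) ≤ 1 + pr n * γRD n := by
        have := mul_nonneg (hpr n hn) (hRD n hn).le; linarith
      exact Real.logb_nonneg one_lt_two hx
    · rintro ⟨ps, pr, Rr, h, rfl⟩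
      obtain ⟨pr', _, h', heq⟩ := key_mod N γSR γRD hRD Es Er ps pr Rr h
      obtain ⟨hfeas, hobj⟩ := P1_of_mod N γSR γRD Es Er ps pr' Rr h' heq
      exact ⟨ps, pr', hfeas, hobj.symm⟩
  · intro ps pr Rr h _
    exact key_mod N γSR γRD hRD Es Er ps pr Rr h
end

section
/- (Theorem 1, value statement) Suppose γ_SR[n] is non-increasing in n and γ_RD[n] is non-decreasing in n. Then the optimal value of the throughput maximization problem (P1) equals min{ R̄_s(E_s), R̄_r(E_r) }, where R̄_s(E_s) is the maximum of ∑_{n=1}^{N−1} log₂(1+p_s[n]γ_SR[n]) subject to ∑ p_s[n] ≤ E_s, p_s ≥ 0, and R̄_r(E_r) is the maximum of ∑_{n=2}^{N} log₂(1+p_r[n]γ_RD[n]) subject to ∑ p_r[n] ≤ E_r, p_r ≥ 0. -/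
open Finset


/-- Sorting lemma: any allocation can be replaced by one with the same rate sum,
no larger power sum, and rates monotone (nondecreasing) on `range k`,
provided `γ` is positive and nondecreasing there. -/
lemma exists_sorted_alloc (k : ℕ) (γ p : ℕ → ℝ)
    (hγ : ∀ i, i < k → 0 < γ i)
    (hγm : ∀ a b : ℕ, a ≤ b → b < k → γ a ≤ γ b)
    (hp : ∀ i, i < k → 0 ≤ p i) :
    ∃ q : ℕ → ℝ, (∀ i, i < k → 0 ≤ q i) ∧
      (∑ i ∈ range k, q i) ≤ (∑ i ∈ range k, p i) ∧
      (∑ i ∈ range k, Real.logb 2 (1 + q i * γ i)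
        = ∑ i ∈ range k, Real.logb 2 (1 + p i * γ i)) ∧
      (∀ a b : ℕ, a ≤ b → b < k →
        Real.logb 2 (1 + q a * γ a) ≤ Real.logb 2 (1 + q b * γ b)) := by
  classical
  set r : Fin k → ℝ := fun i => Real.logb 2 (1 + p i * γ i) with hrdef
  have hpos : ∀ i : Fin k, (0:ℝ) < 1 + p i * γ i := fun i => by
    have h1 := hp i i.2; have h2 := (hγ i i.2).le; nlinarith
  have hr0 : ∀ i : Fin k, 0 ≤ r i := fun i =>
    Real.logb_nonneg one_lt_two (by nlinarith [hp i i.2, (hγ i i.2).le])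
  set σ := Tuple.sort r with hσdef
  have hmono : Monotone (r ∘ σ) := Tuple.monotone_sort r
  set q : ℕ → ℝ := fun i =>
    if h : i < k then ((2:ℝ) ^ (r (σ ⟨i, h⟩)) - 1) / γ i else 0 with hqdef
  have h2r : ∀ i : Fin k, (1:ℝ) ≤ (2:ℝ) ^ (r i) := fun i => by
    have := Real.rpow_le_rpow_of_exponent_le (by norm_num : (1:ℝ) ≤ 2) (hr0 i)
    simpa using this
  have hqk : ∀ (i : ℕ) (h : i < k), q i = ((2:ℝ) ^ (r (σ ⟨i, h⟩)) - 1) / γ i := by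
    intro i h; simp [hqdef, h]
  have hq0 : ∀ i, i < k → 0 ≤ q i := by
    intro i h; rw [hqk i h]
    exact div_nonneg (by linarith [h2r (σ ⟨i, h⟩)]) (hγ i h).le
  have hkey : ∀ (i : ℕ) (h : i < k), 1 + q i * γ i = (2:ℝ) ^ (r (σ ⟨i, h⟩)) := by
    intro i h; rw [hqk i h, div_mul_cancel₀ _ (hγ i h).ne']; ring
  have hrate : ∀ (i : ℕ) (h : i < k),
      Real.logb 2 (1 + q i * γ i) = r (σ ⟨i, h⟩) := by
    intro i h; rw [hkey i h]
    exact Real.logb_rpow (by norm_num) (by norm_num)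
  have hpform : ∀ i : Fin k, p i = ((2:ℝ) ^ (r i) - 1) * (γ (i:ℕ))⁻¹ := by
    intro i
    have : (2:ℝ) ^ (r i) = 1 + p i * γ i :=
      Real.rpow_logb (by norm_num) (by norm_num) (hpos i)
    rw [this]
    rw [add_sub_cancel_left, mul_assoc, mul_inv_cancel₀ (hγ i i.2).ne', mul_one]
  refine ⟨q, hq0, ?_, ?_, ?_⟩
  · -- budget
    have hF : Monotone (fun i : Fin k => (2:ℝ) ^ (r (σ i)) - 1) := by
      intro a b hab
      have := Real.rpow_le_rpow_of_exponent_le (by norm_num : (1:ℝ) ≤ 2) (hmono hab)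
      simpa using this
    have hG : Antitone (fun i : Fin k => (γ (i:ℕ))⁻¹) := by
      intro a b hab
      exact inv_anti₀ (hγ a a.2) (hγm a b hab b.2)
    have hAV : Antivary (fun i : Fin k => (2:ℝ) ^ (r (σ i)) - 1)
        (fun i : Fin k => (γ (i:ℕ))⁻¹) := hF.antivary hG
    have hre := hAV.sum_smul_le_sum_smul_comp_perm (σ := σ)
    simp only [smul_eq_mul] at hre
    have hL : ∑ i ∈ range k, q i
        = ∑ i : Fin k, ((2:ℝ) ^ (r (σ i)) - 1) * (γ (i:ℕ))⁻¹ := by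
      rw [← Fin.sum_univ_eq_sum_range q k]
      refine Finset.sum_congr rfl fun i _ => ?_
      rw [hqk i.1 i.2, div_eq_mul_inv]
    have hR : ∑ i : Fin k, ((2:ℝ) ^ (r (σ i)) - 1) * (γ ((σ i : Fin k) : ℕ))⁻¹
        = ∑ i ∈ range k, p i :=
      calc ∑ i : Fin k, ((2:ℝ) ^ (r (σ i)) - 1) * (γ ((σ i : Fin k) : ℕ))⁻¹
          = ∑ i : Fin k, ((2:ℝ) ^ (r i) - 1) * (γ (i:ℕ))⁻¹ :=
            Equiv.sum_comp σ (fun i : Fin k => ((2:ℝ) ^ (r i) - 1) * (γ (i:ℕ))⁻¹)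
        _ = ∑ i : Fin k, p (i:ℕ) := Finset.sum_congr rfl fun i _ => (hpform i).symm
        _ = ∑ i ∈ range k, p i := Fin.sum_univ_eq_sum_range p k
    calc ∑ i ∈ range k, q i
        = ∑ i : Fin k, ((2:ℝ) ^ (r (σ i)) - 1) * (γ (i:ℕ))⁻¹ := hL
      _ ≤ ∑ i : Fin k, ((2:ℝ) ^ (r (σ i)) - 1) * (γ ((σ i : Fin k) : ℕ))⁻¹ := hre
      _ = ∑ i ∈ range k, p i := hR
  · -- rate sum
    rw [← Fin.sum_univ_eq_sum_range (fun i => Real.logb 2 (1 + q i * γ i)) k,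
        ← Fin.sum_univ_eq_sum_range (fun i => Real.logb 2 (1 + p i * γ i)) k]
    calc ∑ i : Fin k, Real.logb 2 (1 + q (i:ℕ) * γ (i:ℕ))
        = ∑ i : Fin k, r (σ i) := by
          refine Finset.sum_congr rfl fun i _ => ?_
          rw [hrate i.1 i.2]
      _ = ∑ i : Fin k, r i := Equiv.sum_comp σ r
  · intro a b hab hb
    have ha : a < k := lt_of_le_of_lt hab hb
    rw [hrate a ha, hrate b hb]
    exact hmono (show (⟨a, ha⟩ : Fin k) ≤ ⟨b, hb⟩ from hab)

/-- Antitone version: `γ` positive and nonincreasing on `range k` gives an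
equivalent allocation with nonincreasing rates. -/
lemma exists_sorted_alloc_anti (k : ℕ) (γ p : ℕ → ℝ)
    (hγ : ∀ i, i < k → 0 < γ i)
    (hγm : ∀ a b : ℕ, a ≤ b → b < k → γ b ≤ γ a)
    (hp : ∀ i, i < k → 0 ≤ p i) :
    ∃ q : ℕ → ℝ, (∀ i, i < k → 0 ≤ q i) ∧
      (∑ i ∈ range k, q i) ≤ (∑ i ∈ range k, p i) ∧
      (∑ i ∈ range k, Real.logb 2 (1 + q i * γ i)
        = ∑ i ∈ range k, Real.logb 2 (1 + p i * γ i)) ∧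
      (∀ a b : ℕ, a ≤ b → b < k →
        Real.logb 2 (1 + q b * γ b) ≤ Real.logb 2 (1 + q a * γ a)) := by
  classical
  set γ' : ℕ → ℝ := fun i => γ (k - 1 - i) with hγ'def
  set p' : ℕ → ℝ := fun i => p (k - 1 - i) with hp'def
  have hsub : ∀ i, i < k → k - 1 - i < k := by intro i h; omega
  have hsub2 : ∀ i, i < k → k - 1 - (k - 1 - i) = i := by intro i h; omega
  obtain ⟨q', hq'0, hq'sum, hq'rate, hq'mono⟩ :=
    exists_sorted_alloc k γ' p' (fun i h => hγ _ (hsub i h))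
      (fun a b hab hb => hγm _ _ (by omega) (hsub a (lt_of_le_of_lt hab hb)))
      (fun i h => hp _ (hsub i h))
  set q : ℕ → ℝ := fun i => if i < k then q' (k - 1 - i) else 0 with hqdef
  have hqeq : ∀ i, i < k → q i = q' (k - 1 - i) := by intro i h; simp [hqdef, h]
  have hγeq : ∀ i, i < k → γ i = γ' (k - 1 - i) := by
    intro i h; simp only [hγ'def]; rw [hsub2 i h]
  have hrateq : ∀ i, i < k →
      Real.logb 2 (1 + q i * γ i) = Real.logb 2 (1 + q' (k - 1 - i) * γ' (k - 1 - i)) := by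
    intro i h; rw [hqeq i h, hγeq i h]
  refine ⟨q, ?_, ?_, ?_, ?_⟩
  · intro i h; rw [hqeq i h]; exact hq'0 _ (hsub i h)
  · calc ∑ i ∈ range k, q i = ∑ i ∈ range k, q' (k - 1 - i) :=
          Finset.sum_congr rfl fun i hi => hqeq i (mem_range.mp hi)
      _ = ∑ i ∈ range k, q' i := Finset.sum_range_reflect q' k
      _ ≤ ∑ i ∈ range k, p' i := hq'sum
      _ = ∑ i ∈ range k, p (k - 1 - i) := rfl
      _ = ∑ i ∈ range k, p i := Finset.sum_range_reflect p k
  · calc ∑ i ∈ range k, Real.logb 2 (1 + q i * γ i)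
        = ∑ i ∈ range k, Real.logb 2 (1 + q' (k - 1 - i) * γ' (k - 1 - i)) :=
          Finset.sum_congr rfl fun i hi => hrateq i (mem_range.mp hi)
      _ = ∑ i ∈ range k, Real.logb 2 (1 + q' i * γ' i) :=
          Finset.sum_range_reflect (fun i => Real.logb 2 (1 + q' i * γ' i)) k
      _ = ∑ i ∈ range k, Real.logb 2 (1 + p' i * γ' i) := hq'rate
      _ = ∑ i ∈ range k, Real.logb 2 (1 + p (k - 1 - i) * γ (k - 1 - i)) := rfl
      _ = ∑ i ∈ range k, Real.logb 2 (1 + p i * γ i) :=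
          Finset.sum_range_reflect (fun i => Real.logb 2 (1 + p i * γ i)) k
  · intro a b hab hb
    have ha : a < k := lt_of_le_of_lt hab hb
    rw [hrateq a ha, hrateq b hb]
    exact hq'mono (k - 1 - b) (k - 1 - a) (by omega) (hsub a ha)

/-- Prefix-sum inequality for a nondecreasing sequence. -/
lemma prefix_mono (k j : ℕ) (hj : j ≤ k) (r : ℕ → ℝ)
    (h : ∀ a b : ℕ, a ≤ b → b < k → r a ≤ r b) :
    (k : ℝ) * ∑ i ∈ range j, r i ≤ (j : ℝ) * ∑ i ∈ range k, r i := by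
  have hsplit : ∑ i ∈ range k, r i = ∑ i ∈ range j, r i + ∑ i ∈ Ico j k, r i := by
    rw [range_eq_Ico, range_eq_Ico]
    exact (Finset.sum_Ico_consecutive r (Nat.zero_le j) hj).symm
  have hdc : ((k - j : ℕ) : ℝ) * ∑ i ∈ range j, r i ≤ (j : ℝ) * ∑ i ∈ Ico j k, r i := by
    have key : ∑ a ∈ range j, ∑ b ∈ Ico j k, r a ≤ ∑ a ∈ range j, ∑ b ∈ Ico j k, r b := by
      refine Finset.sum_le_sum fun a ha => Finset.sum_le_sum fun b hb => ?_
      exact h a b (le_trans (le_of_lt (mem_range.mp ha)) (mem_Ico.mp hb).1) (mem_Ico.mp hb).2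
    have hL : ∑ a ∈ range j, ∑ b ∈ Ico j k, r a
        = ((k - j : ℕ) : ℝ) * ∑ a ∈ range j, r a := by
      simp [Finset.sum_const, Nat.card_Ico, mul_comm, Finset.mul_sum, Finset.sum_mul]
    have hRR : ∑ a ∈ range j, ∑ b ∈ Ico j k, r b = (j : ℝ) * ∑ b ∈ Ico j k, r b := by
      simp [Finset.sum_const]
    rw [hL, hRR] at key; exact key
  have hcast : ((k - j : ℕ) : ℝ) = (k : ℝ) - (j : ℝ) := by
    rw [Nat.cast_sub hj]
  rw [hcast] at hdc
  rw [hsplit]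
  ring_nf
  ring_nf at hdc
  linarith

/-- Prefix-sum inequality for a nonincreasing sequence. -/
lemma prefix_anti' (k j : ℕ) (hj : j ≤ k) (r : ℕ → ℝ)
    (h : ∀ a b : ℕ, a ≤ b → b < k → r b ≤ r a) :
    (j : ℝ) * ∑ i ∈ range k, r i ≤ (k : ℝ) * ∑ i ∈ range j, r i := by
  have := prefix_mono k j hj (fun i => - r i)
    (fun a b hab hb => neg_le_neg (h a b hab hb))
  simp only [Finset.sum_neg_distrib, mul_neg] at this
  linarith

/-- Scaling a nonnegative allocation to hit any value between `0` and its rate sum. -/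
lemma exists_scale (k : ℕ) (c : ℕ → ℝ) (hc : ∀ i, i < k → 0 ≤ c i) (w : ℝ)
    (hw0 : 0 ≤ w) (hw1 : w ≤ ∑ i ∈ range k, Real.logb 2 (1 + c i)) :
    ∃ t ∈ Set.Icc (0:ℝ) 1, ∑ i ∈ range k, Real.logb 2 (1 + t * c i) = w := by
  set g : ℝ → ℝ := fun t => ∑ i ∈ range k, Real.logb 2 (1 + t * c i) with hg
  have hcont : ContinuousOn g (Set.Icc (0:ℝ) 1) := by
    apply continuousOn_finset_sum
    intro i hi
    have hci := hc i (mem_range.mp hi)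
    simp only [Real.logb]
    apply ContinuousOn.div_const
    apply ContinuousOn.log
    · exact (continuousOn_const.add (continuousOn_id.mul continuousOn_const))
    · intro t ht
      have : 0 ≤ t * c i := mul_nonneg ht.1 hci
      positivity
  have hg0 : g 0 = 0 := by simp [hg]
  have hsub := intermediate_value_Icc (by norm_num : (0:ℝ) ≤ 1) hcont
  have hmem : w ∈ Set.Icc (g 0) (g 1) := by
    rw [hg0]
    exact ⟨hw0, by simpa [hg] using hw1⟩
  obtain ⟨t, ht, hgt⟩ := hsub hmem
  exact ⟨t, ht, hgt⟩

/-- Sum of log-rates is bounded by the all-`E` allocation. -/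
lemma sum_logb_le (s : Finset ℕ) (γ p : ℕ → ℝ) (E : ℝ)
    (hγ : ∀ n ∈ s, 0 < γ n) (hp : ∀ n ∈ s, 0 ≤ p n) (hsum : ∑ n ∈ s, p n ≤ E) :
    ∑ n ∈ s, Real.logb 2 (1 + p n * γ n) ≤ ∑ n ∈ s, Real.logb 2 (1 + E * γ n) := by
  refine Finset.sum_le_sum fun n hn => ?_
  have hpn : p n ≤ E := le_trans (Finset.single_le_sum hp hn) hsum
  have h1 : (0:ℝ) < 1 + p n * γ n := by nlinarith [hp n hn, (hγ n hn).le]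
  apply Real.logb_le_logb_of_le one_lt_two h1
  nlinarith [hγ n hn]

set_option maxHeartbeats 2000000 in
/-- Theorem 1 (value statement): with `γ_SR` non-increasing and `γ_RD`
non-decreasing, the optimal value of (P1) equals the minimum of the two
individual-link water-filling capacities `R̄_s(E_s)` and `R̄_r(E_r)`. -/
theorem stmt_11 (N : ℕ) (hN : 2 ≤ N) (γSR γRD : ℕ → ℝ)
    (hSR0 : ∀ n ∈ Finset.Icc 1 (N - 1), 0 < γSR n)
    (hRD0 : ∀ n ∈ Finset.Icc 2 N, 0 < γRD n)
    (hSR : ∀ m ∈ Finset.Icc 1 (N - 1), ∀ n ∈ Finset.Icc 1 (N - 1), m ≤ n → γSR n ≤ γSR m)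
    (hRD : ∀ m ∈ Finset.Icc 2 N, ∀ n ∈ Finset.Icc 2 N, m ≤ n → γRD m ≤ γRD n)
    (Es Er : ℝ) (hEs : 0 < Es) (hEr : 0 < Er) :
    sSup {v : ℝ | ∃ ps pr : ℕ → ℝ,
        (∀ n ∈ Finset.Icc 1 (N - 1), 0 ≤ ps n) ∧
        (∀ n ∈ Finset.Icc 2 N, 0 ≤ pr n) ∧
        (∑ n ∈ Finset.Icc 1 (N - 1), ps n) ≤ Es ∧
        (∑ n ∈ Finset.Icc 2 N, pr n) ≤ Er ∧
        (∀ n ∈ Finset.Icc 2 N,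
          (∑ i ∈ Finset.Icc 2 n, Real.logb 2 (1 + pr i * γRD i)) ≤
            ∑ i ∈ Finset.Icc 1 (n - 1), Real.logb 2 (1 + ps i * γSR i)) ∧
        v = ∑ n ∈ Finset.Icc 2 N, Real.logb 2 (1 + pr n * γRD n)} =
      min
        (sSup {v : ℝ | ∃ ps : ℕ → ℝ,
          (∀ n ∈ Finset.Icc 1 (N - 1), 0 ≤ ps n) ∧
          (∑ n ∈ Finset.Icc 1 (N - 1), ps n) ≤ Es ∧
          v = ∑ n ∈ Finset.Icc 1 (N - 1), Real.logb 2 (1 + ps n * γSR n)})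
        (sSup {v : ℝ | ∃ pr : ℕ → ℝ,
          (∀ n ∈ Finset.Icc 2 N, 0 ≤ pr n) ∧
          (∑ n ∈ Finset.Icc 2 N, pr n) ≤ Er ∧
          v = ∑ n ∈ Finset.Icc 2 N, Real.logb 2 (1 + pr n * γRD n)}) := by
  classical
  set k := N - 1 with hkdef
  have hk1 : 1 ≤ k := by omega
  -- conversion lemmas between Icc sums and range sums
  have convS : ∀ (f : ℕ → ℝ) (m : ℕ), 1 ≤ m →
      ∑ n ∈ Finset.Icc 1 m, f n = ∑ i ∈ range m, f (1 + i) := by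
    intro f m _
    rw [← Finset.Ico_add_one_right_eq_Icc, Finset.sum_Ico_eq_sum_range]
    congr 1
  have convR : ∀ (f : ℕ → ℝ) (m : ℕ), 2 ≤ m →
      ∑ n ∈ Finset.Icc 2 m, f n = ∑ i ∈ range (m - 1), f (2 + i) := by
    intro f m hm
    rw [← Finset.Ico_add_one_right_eq_Icc, Finset.sum_Ico_eq_sum_range]
    have hss : m + 1 - 2 = m - 1 := by omega
    rw [hss]
  have hmemS : ∀ i, i < k → (1 + i) ∈ Finset.Icc 1 (N - 1) := by
    intro i h; rw [Finset.mem_Icc]; omega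
  have hmemR : ∀ i, i < k → (2 + i) ∈ Finset.Icc 2 N := by
    intro i h; rw [Finset.mem_Icc]; omega
  -- the three sets
  set S := {v : ℝ | ∃ ps pr : ℕ → ℝ,
        (∀ n ∈ Finset.Icc 1 (N - 1), 0 ≤ ps n) ∧
        (∀ n ∈ Finset.Icc 2 N, 0 ≤ pr n) ∧
        (∑ n ∈ Finset.Icc 1 (N - 1), ps n) ≤ Es ∧
        (∑ n ∈ Finset.Icc 2 N, pr n) ≤ Er ∧
        (∀ n ∈ Finset.Icc 2 N,
          (∑ i ∈ Finset.Icc 2 n, Real.logb 2 (1 + pr i * γRD i)) ≤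
            ∑ i ∈ Finset.Icc 1 (n - 1), Real.logb 2 (1 + ps i * γSR i)) ∧
        v = ∑ n ∈ Finset.Icc 2 N, Real.logb 2 (1 + pr n * γRD n)} with hSdef
  set A := {v : ℝ | ∃ ps : ℕ → ℝ,
          (∀ n ∈ Finset.Icc 1 (N - 1), 0 ≤ ps n) ∧
          (∑ n ∈ Finset.Icc 1 (N - 1), ps n) ≤ Es ∧
          v = ∑ n ∈ Finset.Icc 1 (N - 1), Real.logb 2 (1 + ps n * γSR n)} with hAdef
  set B := {v : ℝ | ∃ pr : ℕ → ℝ,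
          (∀ n ∈ Finset.Icc 2 N, 0 ≤ pr n) ∧
          (∑ n ∈ Finset.Icc 2 N, pr n) ≤ Er ∧
          v = ∑ n ∈ Finset.Icc 2 N, Real.logb 2 (1 + pr n * γRD n)} with hBdef
  -- zero memberships
  have hA0 : (0:ℝ) ∈ A := by
    refine ⟨fun _ => 0, fun n _ => le_refl 0, by simp [hEs.le], by simp⟩
  have hB0 : (0:ℝ) ∈ B := by
    refine ⟨fun _ => 0, fun n _ => le_refl 0, by simp [hEr.le], by simp⟩
  have hS0 : (0:ℝ) ∈ S := by
    refine ⟨fun _ => 0, fun _ => 0, fun n _ => le_refl 0, fun n _ => le_refl 0,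
      by simp [hEs.le], by simp [hEr.le], by simp, by simp⟩
  -- boundedness
  have hbddA : BddAbove A := by
    refine ⟨∑ n ∈ Finset.Icc 1 (N - 1), Real.logb 2 (1 + Es * γSR n), ?_⟩
    rintro v ⟨ps, hps0, hpsE, rfl⟩
    exact sum_logb_le _ _ _ _ hSR0 hps0 hpsE
  have hbddB : BddAbove B := by
    refine ⟨∑ n ∈ Finset.Icc 2 N, Real.logb 2 (1 + Er * γRD n), ?_⟩
    rintro v ⟨pr, hpr0, hprE, rfl⟩
    exact sum_logb_le _ _ _ _ hRD0 hpr0 hprE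
  have hbddS : BddAbove S := by
    refine ⟨∑ n ∈ Finset.Icc 2 N, Real.logb 2 (1 + Er * γRD n), ?_⟩
    rintro v ⟨ps, pr, hps0, hpr0, hpsE, hprE, hcaus, rfl⟩
    exact sum_logb_le _ _ _ _ hRD0 hpr0 hprE
  -- membership in S implies ≤ both suprema
  have hupper : ∀ v ∈ S, v ≤ min (sSup A) (sSup B) := by
    rintro v ⟨ps, pr, hps0, hpr0, hpsE, hprE, hcaus, rfl⟩
    refine le_min ?_ ?_
    · have hNm : N ∈ Finset.Icc 2 N := Finset.mem_Icc.mpr ⟨hN, le_refl N⟩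
      have := hcaus N hNm
      refine le_trans this (le_csSup hbddA ?_)
      exact ⟨ps, hps0, hpsE, rfl⟩
    · exact le_csSup hbddB ⟨pr, hpr0, hprE, rfl⟩
  refine le_antisymm (csSup_le ⟨0, hS0⟩ hupper) ?_
  -- lower bound
  rw [le_csSup_iff hbddS ⟨0, hS0⟩]
  intro b hb
  by_contra hcon
  push_neg at hcon
  have hbRs : b < sSup A := lt_of_lt_of_le hcon (min_le_left _ _)
  have hbRr : b < sSup B := lt_of_lt_of_le hcon (min_le_right _ _)
  obtain ⟨vs, hvsA, hbvs⟩ := exists_lt_of_lt_csSup ⟨0, hA0⟩ hbRs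
  obtain ⟨vr, hvrB, hbvr⟩ := exists_lt_of_lt_csSup ⟨0, hB0⟩ hbRr
  obtain ⟨ps, hps0, hpsE, hvs⟩ := hvsA
  obtain ⟨pr, hpr0, hprE, hvr⟩ := hvrB
  -- shift to range k
  set Ps : ℕ → ℝ := fun i => ps (1 + i) with hPsdef
  set Γs : ℕ → ℝ := fun i => γSR (1 + i) with hΓsdef
  set Pr : ℕ → ℝ := fun i => pr (2 + i) with hPrdef
  set Γr : ℕ → ℝ := fun i => γRD (2 + i) with hΓrdef
  have hPs0 : ∀ i, i < k → 0 ≤ Ps i := fun i h => hps0 _ (hmemS i h)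
  have hPr0 : ∀ i, i < k → 0 ≤ Pr i := fun i h => hpr0 _ (hmemR i h)
  have hΓs0 : ∀ i, i < k → 0 < Γs i := fun i h => hSR0 _ (hmemS i h)
  have hΓr0 : ∀ i, i < k → 0 < Γr i := fun i h => hRD0 _ (hmemR i h)
  have hΓsa : ∀ a b' : ℕ, a ≤ b' → b' < k → Γs b' ≤ Γs a := fun a b' hab hb' =>
    hSR _ (hmemS a (lt_of_le_of_lt hab hb')) _ (hmemS b' hb') (by omega)
  have hΓrm : ∀ a b' : ℕ, a ≤ b' → b' < k → Γr a ≤ Γr b' := fun a b' hab hb' =>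
    hRD _ (hmemR a (lt_of_le_of_lt hab hb')) _ (hmemR b' hb') (by omega)
  have hPsE : ∑ i ∈ range k, Ps i ≤ Es := by
    rw [← convS ps (N - 1) (by omega)]; exact hpsE
  have hPrE : ∑ i ∈ range k, Pr i ≤ Er := by
    have := convR pr N hN
    rw [← this]; exact hprE
  have hvs' : vs = ∑ i ∈ range k, Real.logb 2 (1 + Ps i * Γs i) := by
    rw [hvs, convS (fun n => Real.logb 2 (1 + ps n * γSR n)) (N - 1) (by omega)]
  have hvr' : vr = ∑ i ∈ range k, Real.logb 2 (1 + Pr i * Γr i) := by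
    rw [hvr, convR (fun n => Real.logb 2 (1 + pr n * γRD n)) N hN]
  -- sort both allocations
  obtain ⟨Qs, hQs0, hQsSum, hQsRate, hQsAnti⟩ :=
    exists_sorted_alloc_anti k Γs Ps hΓs0 hΓsa hPs0
  obtain ⟨Qr, hQr0, hQrSum, hQrRate, hQrMono⟩ :=
    exists_sorted_alloc k Γr Pr hΓr0 hΓrm hPr0
  -- nonnegativity of the values
  have hrate_nonneg : ∀ (q g : ℕ → ℝ), (∀ i, i < k → 0 ≤ q i) → (∀ i, i < k → 0 < g i) →
      ∀ i ∈ range k, (0:ℝ) ≤ Real.logb 2 (1 + q i * g i) := by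
    intro q g hq hg i hi
    have hik := mem_range.mp hi
    exact Real.logb_nonneg one_lt_two (by nlinarith [hq i hik, (hg i hik).le])
  have hvs0 : 0 ≤ vs := by
    rw [hvs']; exact Finset.sum_nonneg (hrate_nonneg Ps Γs hPs0 hΓs0)
  have hvr0 : 0 ≤ vr := by
    rw [hvr']; exact Finset.sum_nonneg (hrate_nonneg Pr Γr hPr0 hΓr0)
  -- scale relay allocation to value w := min vs vr
  set w := min vs vr with hwdef
  have hw0 : 0 ≤ w := le_min hvs0 hvr0
  have hwvr : w ≤ ∑ i ∈ range k, Real.logb 2 (1 + Qr i * Γr i) := by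
    rw [hQrRate, ← hvr']; exact min_le_right _ _
  obtain ⟨t, ht, htw⟩ := exists_scale k (fun i => Qr i * Γr i)
    (fun i h => mul_nonneg (hQr0 i h) (hΓr0 i h).le) w hw0 hwvr
  -- rate sequences
  set rr : ℕ → ℝ := fun i => Real.logb 2 (1 + t * (Qr i * Γr i)) with hrrdef
  set rs : ℕ → ℝ := fun i => Real.logb 2 (1 + Qs i * Γs i) with hrsdef
  have hrrw : ∑ i ∈ range k, rr i = w := htw
  have hrsvs : ∑ i ∈ range k, rs i = vs := by rw [hrsdef]; rw [hQsRate, ← hvs']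
  have hrrpos : ∀ i, i < k → (0:ℝ) < 1 + t * (Qr i * Γr i) := by
    intro i h
    have := mul_nonneg ht.1 (mul_nonneg (hQr0 i h) (hΓr0 i h).le)
    linarith
  have hrrMono : ∀ a b' : ℕ, a ≤ b' → b' < k → rr a ≤ rr b' := by
    intro a b' hab hb'
    have ha : a < k := lt_of_le_of_lt hab hb'
    have hca : (0:ℝ) < 1 + Qr a * Γr a := by
      nlinarith [hQr0 a ha, (hΓr0 a ha).le]
    have hcb : (0:ℝ) < 1 + Qr b' * Γr b' := by
      nlinarith [hQr0 b' hb', (hΓr0 b' hb').le]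
    have hcc : Qr a * Γr a ≤ Qr b' * Γr b' := by
      have := hQrMono a b' hab hb'
      have := (Real.logb_le_logb one_lt_two hca hcb).mp this
      linarith
    apply Real.logb_le_logb_of_le one_lt_two (hrrpos a ha)
    nlinarith [ht.1]
  have hrsAnti : ∀ a b' : ℕ, a ≤ b' → b' < k → rs b' ≤ rs a := by
    intro a b' hab hb'; exact hQsAnti a b' hab hb'
  -- final allocations
  set psF : ℕ → ℝ := fun n => Qs (n - 1) with hpsFdef
  set prF : ℕ → ℝ := fun n => t * Qr (n - 2) with hprFdef
  have hQrSumNonneg : 0 ≤ ∑ i ∈ range k, Qr i :=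
    Finset.sum_nonneg fun i hi => hQr0 i (mem_range.mp hi)
  have hwS : w ∈ S := by
    refine ⟨psF, prF, ?_, ?_, ?_, ?_, ?_, ?_⟩
    · intro n hn
      have := Finset.mem_Icc.mp hn
      exact hQs0 (n - 1) (by omega)
    · intro n hn
      have := Finset.mem_Icc.mp hn
      exact mul_nonneg ht.1 (hQr0 (n - 2) (by omega))
    · rw [convS psF (N - 1) (by omega)]
      calc ∑ i ∈ range k, psF (1 + i) = ∑ i ∈ range k, Qs i :=
            Finset.sum_congr rfl fun i _ => by simp only [hpsFdef]; congr 1; omega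
        _ ≤ ∑ i ∈ range k, Ps i := hQsSum
        _ ≤ Es := hPsE
    · rw [convR prF N hN]
      calc ∑ i ∈ range k, prF (2 + i) = ∑ i ∈ range k, t * Qr i :=
            Finset.sum_congr rfl fun i _ => by simp only [hprFdef]; congr 2; omega
        _ = t * ∑ i ∈ range k, Qr i := by rw [Finset.mul_sum]
        _ ≤ 1 * ∑ i ∈ range k, Qr i := mul_le_mul_of_nonneg_right ht.2 hQrSumNonneg
        _ ≤ Er := by rw [one_mul]; exact le_trans hQrSum hPrE
    · -- causality
      intro n hn
      have hn' := Finset.mem_Icc.mp hn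
      set j := n - 1 with hjdef
      have hj1 : 1 ≤ j := by omega
      have hjk : j ≤ k := by omega
      have hLHS : ∑ i ∈ Finset.Icc 2 n, Real.logb 2 (1 + prF i * γRD i)
          = ∑ i ∈ range j, rr i := by
        rw [convR (fun i => Real.logb 2 (1 + prF i * γRD i)) n hn'.1]
        refine Finset.sum_congr (by rw [hjdef]) fun i hi => ?_
        simp only [hprFdef, hrrdef, hΓrdef]
        have h2i : 2 + i - 2 = i := by omega
        rw [h2i, mul_assoc]
      have hRHS : ∑ i ∈ Finset.Icc 1 (n - 1), Real.logb 2 (1 + psF i * γSR i)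
          = ∑ i ∈ range j, rs i := by
        rw [convS (fun i => Real.logb 2 (1 + psF i * γSR i)) (n - 1) (by omega)]
        refine Finset.sum_congr (by rw [hjdef]) fun i hi => ?_
        simp only [hpsFdef, hrsdef, hΓsdef]
        have h1i : 1 + i - 1 = i := by omega
        rw [h1i]
      rw [hLHS, hRHS]
      have h1 : (k:ℝ) * ∑ i ∈ range j, rr i ≤ (j:ℝ) * ∑ i ∈ range k, rr i :=
        prefix_mono k j hjk rr hrrMono
      have h2 : (j:ℝ) * ∑ i ∈ range k, rs i ≤ (k:ℝ) * ∑ i ∈ range j, rs i :=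
        prefix_anti' k j hjk rs (fun a b' hab hb' => hrsAnti a b' hab hb')
      have h3 : (j:ℝ) * ∑ i ∈ range k, rr i ≤ (j:ℝ) * ∑ i ∈ range k, rs i := by
        rw [hrrw, hrsvs]
        exact mul_le_mul_of_nonneg_left (min_le_left _ _) (Nat.cast_nonneg j)
      have hkpos : (0:ℝ) < (k:ℝ) := by exact_mod_cast hk1
      have := le_trans h1 (le_trans h3 h2)
      exact le_of_mul_le_mul_left this hkpos
    · -- value
      rw [convR (fun n => Real.logb 2 (1 + prF n * γRD n)) N hN]
      rw [← hrrw]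
      refine Finset.sum_congr rfl fun i hi => ?_
      simp only [hprFdef, hrrdef, hΓrdef]
      have h2i : 2 + i - 2 = i := by omega
      rw [h2i, mul_assoc]
  have := hb hwS
  have : b < w := lt_min hbvs hbvr
  linarith [hb hwS]
end

section
/- (Upper bound half of Theorem 1) For any feasible solution of (P1), the objective ∑_{n=2}^N log₂(1+p_r[n]γ_RD[n]) is at most min{R̄_s(E_s), R̄_r(E_r)}: it is at most R̄_r(E_r) since the relay power budget alone caps it, and at most R̄_s(E_s) by the causality constraint at n = N combined with the source power budget. -/
lemma bdd_aux (s : Finset ℕ) (γ : ℕ → ℝ) (hγ : ∀ n ∈ s, 0 < γ n) (E : ℝ) :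
    BddAbove {v : ℝ | ∃ p : ℕ → ℝ,
      (∀ n ∈ s, 0 ≤ p n) ∧ (∑ n ∈ s, p n) ≤ E ∧
      v = ∑ n ∈ s, Real.logb 2 (1 + p n * γ n)} := by
  refine ⟨∑ n ∈ s, Real.logb 2 (1 + E * γ n), ?_⟩
  rintro v ⟨p, hp0, hpE, rfl⟩
  apply Finset.sum_le_sum
  intro n hn
  have hpn : 0 ≤ p n := hp0 n hn
  have hγn := hγ n hn
  have hpnE : p n ≤ E := le_trans (Finset.single_le_sum hp0 hn) hpE
  have h1 : (0:ℝ) < 1 + p n * γ n := by positivity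
  exact Real.logb_le_logb_of_le one_lt_two h1 (by nlinarith)

/-- Upper bound half of Theorem 1: for any feasible solution of (P1), the
objective is at most `min{R̄_s(E_s), R̄_r(E_r)}`, the water-filling capacities
of the two links (no monotonicity of the channels is needed). -/
theorem stmt_12 (N : ℕ) (hN : 2 ≤ N) (γSR γRD : ℕ → ℝ)
    (hSR0 : ∀ n ∈ Finset.Icc 1 (N - 1), 0 < γSR n)
    (hRD0 : ∀ n ∈ Finset.Icc 2 N, 0 < γRD n)
    (Es Er : ℝ) (hEs : 0 < Es) (hEr : 0 < Er) :
    ∀ ps pr : ℕ → ℝ,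
      (∀ n ∈ Finset.Icc 1 (N - 1), 0 ≤ ps n) →
      (∀ n ∈ Finset.Icc 2 N, 0 ≤ pr n) →
      (∑ n ∈ Finset.Icc 1 (N - 1), ps n) ≤ Es →
      (∑ n ∈ Finset.Icc 2 N, pr n) ≤ Er →
      (∀ n ∈ Finset.Icc 2 N,
        (∑ i ∈ Finset.Icc 2 n, Real.logb 2 (1 + pr i * γRD i)) ≤
          ∑ i ∈ Finset.Icc 1 (n - 1), Real.logb 2 (1 + ps i * γSR i)) →
      (∑ n ∈ Finset.Icc 2 N, Real.logb 2 (1 + pr n * γRD n)) ≤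
        min
          (sSup {v : ℝ | ∃ ps' : ℕ → ℝ,
            (∀ n ∈ Finset.Icc 1 (N - 1), 0 ≤ ps' n) ∧
            (∑ n ∈ Finset.Icc 1 (N - 1), ps' n) ≤ Es ∧
            v = ∑ n ∈ Finset.Icc 1 (N - 1), Real.logb 2 (1 + ps' n * γSR n)})
          (sSup {v : ℝ | ∃ pr' : ℕ → ℝ,
            (∀ n ∈ Finset.Icc 2 N, 0 ≤ pr' n) ∧
            (∑ n ∈ Finset.Icc 2 N, pr' n) ≤ Er ∧
            v = ∑ n ∈ Finset.Icc 2 N, Real.logb 2 (1 + pr' n * γRD n)}) := by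
  intro ps pr hps0 hpr0 hpsE hprE hcaus
  refine le_min ?_ ?_
  · -- via causality at n = N and membership of source sum in the first set
    have hNmem : N ∈ Finset.Icc 2 N := by simp [hN]
    have h := hcaus N hNmem
    refine le_trans h (le_csSup (bdd_aux _ _ hSR0 Es) ?_)
    exact ⟨ps, hps0, hpsE, rfl⟩
  · exact le_csSup (bdd_aux _ _ hRD0 Er) ⟨pr, hpr0, hprE, rfl⟩
end

section
/- (Achievability half of Theorem 1) Suppose γ_SR[n] is non-increasing and γ_RD[n] is non-decreasing. If R̄_s(E_s) ≤ R̄_r(E_r), let Ê_r ∈ [0,E_r] satisfy R̄_r(Ê_r) = R̄_s(E_s); then the pair consisting of the classic water-filling allocation for the source with total power E_s and the classic water-filling allocation for the relay with total power Ê_r is feasible for (P1) (i.e., satisfies all causality constraints) and achieves objective value R̄_s(E_s). -/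
lemma rate_eq (c γ : ℝ) (hγ : 0 < γ) (hc : 0 ≤ c) :
    Real.logb 2 (1 + max (c - 1/γ) 0 * γ) = max (Real.logb 2 (c*γ)) 0 := by
  rcases le_or_gt (c - 1/γ) 0 with h | h
  · have hle : c * γ ≤ 1 := by
      have : c ≤ 1/γ := by linarith
      have := mul_le_mul_of_nonneg_right this hγ.le
      rwa [one_div, inv_mul_cancel₀ hγ.ne'] at this
    rw [max_eq_right h, zero_mul, add_zero, Real.logb_one,
        max_eq_right (Real.logb_nonpos one_lt_two (by positivity) hle)]
  · have h1 : 1 + (c - 1/γ) * γ = c * γ := by field_simp; ring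
    have hgt : (1:ℝ) ≤ c * γ := by
      have : 1/γ < c := by linarith
      have := mul_le_mul_of_nonneg_right this.le hγ.le
      rw [one_div, inv_mul_cancel₀ hγ.ne'] at this
      linarith
    rw [max_eq_left h.le, h1,
        max_eq_left (Real.logb_nonneg one_lt_two hgt)]

lemma partial_le (N : ℕ) (hN : 2 ≤ N) (a b : ℕ → ℝ)
    (ha0 : ∀ i ∈ Finset.Icc 1 (N-1), 0 ≤ a i)
    (hb0 : ∀ i ∈ Finset.Icc 2 N, 0 ≤ b i)
    (hamono : ∀ m ∈ Finset.Icc 1 (N-1), ∀ i ∈ Finset.Icc 1 (N-1), m ≤ i → a i ≤ a m)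
    (hbmono : ∀ m ∈ Finset.Icc 2 N, ∀ i ∈ Finset.Icc 2 N, m ≤ i → b m ≤ b i)
    (htot : ∑ i ∈ Finset.Icc 2 N, b i = ∑ i ∈ Finset.Icc 1 (N-1), a i)
    (n : ℕ) (hn : n ∈ Finset.Icc 2 N) :
    ∑ i ∈ Finset.Icc 2 n, b i ≤ ∑ i ∈ Finset.Icc 1 (n-1), a i := by
  simp only [Finset.mem_Icc] at hn
  obtain ⟨hn2, hnN⟩ := hn
  -- convert Icc to Ioc
  have e1 : ∀ m k : ℕ, Finset.Icc (m+1) k = Finset.Ioc m k := fun m k => Finset.Icc_add_one_left_eq_Ioc m k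
  set S1 := ∑ i ∈ Finset.Ioc 1 n, b i with hS1
  set S2 := ∑ i ∈ Finset.Ioc n N, b i with hS2
  set A1 := ∑ i ∈ Finset.Ioc 0 (n-1), a i with hA1
  set A2 := ∑ i ∈ Finset.Ioc (n-1) (N-1), a i with hA2
  have hsplitb : S1 + S2 = ∑ i ∈ Finset.Ioc 1 N, b i :=
    Finset.sum_Ioc_consecutive _ (by omega) (by omega)
  have hsplita : A1 + A2 = ∑ i ∈ Finset.Ioc 0 (N-1), a i :=
    Finset.sum_Ioc_consecutive _ (by omega) (by omega)
  have hIb : Finset.Icc 2 N = Finset.Ioc 1 N := e1 1 N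
  have hIb' : Finset.Icc 2 n = Finset.Ioc 1 n := e1 1 n
  have hIa : Finset.Icc 1 (N-1) = Finset.Ioc 0 (N-1) := e1 0 (N-1)
  have hIa' : Finset.Icc 1 (n-1) = Finset.Ioc 0 (n-1) := e1 0 (n-1)
  rw [hIb', hIa']
  rw [hIb, hIa] at htot
  have hT : S1 + S2 = A1 + A2 := by rw [hsplitb, hsplita, htot]
  have hmemn : n ∈ Finset.Icc 2 N := Finset.mem_Icc.mpr ⟨hn2, hnN⟩
  have hmemk : n - 1 ∈ Finset.Icc 1 (N-1) := Finset.mem_Icc.mpr ⟨by omega, by omega⟩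
  -- bounds
  have hS1b : S1 ≤ (n - 1 : ℕ) • b n := by
    have := Finset.sum_le_card_nsmul (Finset.Ioc 1 n) b (b n) (fun i hi => by
      simp only [Finset.mem_Ioc] at hi
      exact hbmono i (Finset.mem_Icc.mpr ⟨by omega, by omega⟩) n hmemn hi.2)
    rwa [Nat.card_Ioc] at this
  have hS2b : (N - n : ℕ) • b n ≤ S2 := by
    have := Finset.card_nsmul_le_sum (Finset.Ioc n N) b (b n) (fun i hi => by
      simp only [Finset.mem_Ioc] at hi
      exact hbmono n hmemn i (Finset.mem_Icc.mpr ⟨by omega, by omega⟩) hi.1.le)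
    rwa [Nat.card_Ioc] at this
  have hA1b : (n - 1 : ℕ) • a (n-1) ≤ A1 := by
    have := Finset.card_nsmul_le_sum (Finset.Ioc 0 (n-1)) a (a (n-1)) (fun i hi => by
      simp only [Finset.mem_Ioc] at hi
      exact hamono i (Finset.mem_Icc.mpr ⟨by omega, by omega⟩) (n-1) hmemk hi.2)
    rwa [Nat.card_Ioc, Nat.sub_zero] at this
  have hA2b : A2 ≤ (N - n : ℕ) • a (n-1) := by
    have := Finset.sum_le_card_nsmul (Finset.Ioc (n-1) (N-1)) a (a (n-1)) (fun i hi => by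
      simp only [Finset.mem_Ioc] at hi
      exact hamono (n-1) hmemk i (Finset.mem_Icc.mpr ⟨by omega, by omega⟩) hi.1.le)
    rwa [Nat.card_Ioc, show N - 1 - (n-1) = N - n by omega] at this
  have hbn : 0 ≤ b n := hb0 n hmemn
  have han : 0 ≤ a (n-1) := ha0 (n-1) hmemk
  -- real casts
  have hk : ((n - 1 : ℕ) : ℝ) = (n : ℝ) - 1 := by
    have := Nat.cast_sub (by omega : 1 ≤ n) (R := ℝ); simpa using this
  have hm : ((N - n : ℕ) : ℝ) = (N : ℝ) - n := Nat.cast_sub (by omega)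
  rw [nsmul_eq_mul] at hS1b hS2b hA1b hA2b
  have hM : (0 : ℝ) < (N : ℝ) - 1 := by
    have : (2 : ℝ) ≤ N := by exact_mod_cast hN
    linarith
  -- key: (N-1) * S1 ≤ (n-1) * (S1+S2) and (n-1)*(A1+A2) ≤ (N-1)*A1
  have key1 : ((N:ℝ) - 1) * S1 ≤ ((n:ℝ) - 1) * (S1 + S2) := by
    rw [hk] at hS1b; rw [hm] at hS2b
    have h1 : (0:ℝ) ≤ (n:ℝ) - 1 := by
      have : (2:ℝ) ≤ n := by exact_mod_cast hn2
      linarith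
    have h2 : (0:ℝ) ≤ (N:ℝ) - n := by
      have : (n:ℝ) ≤ N := by exact_mod_cast hnN
      linarith
    nlinarith [mul_le_mul_of_nonneg_left hS1b h2, mul_le_mul_of_nonneg_left hS2b h1]
  have key2 : ((n:ℝ) - 1) * (A1 + A2) ≤ ((N:ℝ) - 1) * A1 := by
    rw [hk] at hA1b; rw [hm] at hA2b
    have h1 : (0:ℝ) ≤ (n:ℝ) - 1 := by
      have : (2:ℝ) ≤ n := by exact_mod_cast hn2
      linarith
    have h2 : (0:ℝ) ≤ (N:ℝ) - n := by
      have : (n:ℝ) ≤ N := by exact_mod_cast hnN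
      linarith
    nlinarith [mul_le_mul_of_nonneg_left hA2b h1, mul_le_mul_of_nonneg_left hA1b h2]
  have : ((N:ℝ) - 1) * S1 ≤ ((N:ℝ) - 1) * A1 := by
    calc ((N:ℝ) - 1) * S1 ≤ ((n:ℝ) - 1) * (S1 + S2) := key1
      _ = ((n:ℝ) - 1) * (A1 + A2) := by rw [hT]
      _ ≤ ((N:ℝ) - 1) * A1 := key2
  exact le_of_mul_le_mul_left (by linarith) hM


/-- Achievability half of Theorem 1: with monotone channels, if
`R̄_s(E_s) ≤ R̄_r(E_r)` and `Ê_r ∈ [0,E_r]` is chosen so that the relay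
water-filling (water level ξ, total power Ê_r) matches the source water-filling
rate (water level η, total power E_s), then the pair of water-filling
allocations is feasible for (P1) and achieves objective value `R̄_s(E_s)`. -/
theorem stmt_13 (N : ℕ) (hN : 2 ≤ N) (γSR γRD : ℕ → ℝ)
    (hSR0 : ∀ n ∈ Finset.Icc 1 (N - 1), 0 < γSR n)
    (hRD0 : ∀ n ∈ Finset.Icc 2 N, 0 < γRD n)
    (hSR : ∀ m ∈ Finset.Icc 1 (N - 1), ∀ n ∈ Finset.Icc 1 (N - 1), m ≤ n → γSR n ≤ γSR m)
    (hRD : ∀ m ∈ Finset.Icc 2 N, ∀ n ∈ Finset.Icc 2 N, m ≤ n → γRD m ≤ γRD n)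
    (Es Er : ℝ) (hEs : 0 < Es) (hEr : 0 < Er)
    (eta xi Ehatr : ℝ) (heta : 0 < eta) (hxi : 0 ≤ xi)
    (hEhat0 : 0 ≤ Ehatr) (hEhat1 : Ehatr ≤ Er)
    (hWFs : (∑ n ∈ Finset.Icc 1 (N - 1), max (eta - 1 / γSR n) 0) = Es)
    (hWFr : (∑ n ∈ Finset.Icc 2 N, max (xi - 1 / γRD n) 0) = Ehatr)
    (hmatch : (∑ n ∈ Finset.Icc 2 N, max (Real.logb 2 (xi * γRD n)) 0) =
      ∑ n ∈ Finset.Icc 1 (N - 1), max (Real.logb 2 (eta * γSR n)) 0) :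
    (∀ n ∈ Finset.Icc 2 N,
      (∑ i ∈ Finset.Icc 2 n, Real.logb 2 (1 + max (xi - 1 / γRD i) 0 * γRD i)) ≤
        ∑ i ∈ Finset.Icc 1 (n - 1),
          Real.logb 2 (1 + max (eta - 1 / γSR i) 0 * γSR i)) ∧
    (∑ n ∈ Finset.Icc 2 N, Real.logb 2 (1 + max (xi - 1 / γRD n) 0 * γRD n)) =
      ∑ n ∈ Finset.Icc 1 (N - 1), max (Real.logb 2 (eta * γSR n)) 0 := by
  have hb : ∀ i ∈ Finset.Icc 2 N,
      Real.logb 2 (1 + max (xi - 1 / γRD i) 0 * γRD i) = max (Real.logb 2 (xi * γRD i)) 0 :=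
    fun i hi => rate_eq xi (γRD i) (hRD0 i hi) hxi
  have ha : ∀ i ∈ Finset.Icc 1 (N-1),
      Real.logb 2 (1 + max (eta - 1 / γSR i) 0 * γSR i) = max (Real.logb 2 (eta * γSR i)) 0 :=
    fun i hi => rate_eq eta (γSR i) (hSR0 i hi) heta.le
  have hbmono : ∀ m ∈ Finset.Icc 2 N, ∀ i ∈ Finset.Icc 2 N, m ≤ i →
      max (Real.logb 2 (xi * γRD m)) 0 ≤ max (Real.logb 2 (xi * γRD i)) 0 := by
    intro m hm i hi hmi
    rcases hxi.eq_or_lt with h | h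
    · simp [← h]
    · exact max_le_max ((Real.logb_le_logb one_lt_two
        (mul_pos h (hRD0 m hm)) (mul_pos h (hRD0 i hi))).mpr
        (mul_le_mul_of_nonneg_left (hRD m hm i hi hmi) h.le)) le_rfl
  have hamono : ∀ m ∈ Finset.Icc 1 (N-1), ∀ i ∈ Finset.Icc 1 (N-1), m ≤ i →
      max (Real.logb 2 (eta * γSR i)) 0 ≤ max (Real.logb 2 (eta * γSR m)) 0 := by
    intro m hm i hi hmi
    exact max_le_max ((Real.logb_le_logb one_lt_two
      (mul_pos heta (hSR0 i hi)) (mul_pos heta (hSR0 m hm))).mpr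
      (mul_le_mul_of_nonneg_left (hSR m hm i hi hmi) heta.le)) le_rfl
  constructor
  · intro n hn
    have hn' := Finset.mem_Icc.mp hn
    have e1 : (∑ i ∈ Finset.Icc 2 n, Real.logb 2 (1 + max (xi - 1 / γRD i) 0 * γRD i)) =
        ∑ i ∈ Finset.Icc 2 n, max (Real.logb 2 (xi * γRD i)) 0 :=
      Finset.sum_congr rfl (fun i hi => by
        have hi' := Finset.mem_Icc.mp hi
        exact hb i (Finset.mem_Icc.mpr ⟨hi'.1, hi'.2.trans hn'.2⟩))
    have e2 : (∑ i ∈ Finset.Icc 1 (n-1), Real.logb 2 (1 + max (eta - 1 / γSR i) 0 * γSR i)) =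
        ∑ i ∈ Finset.Icc 1 (n-1), max (Real.logb 2 (eta * γSR i)) 0 :=
      Finset.sum_congr rfl (fun i hi => by
        have hi' := Finset.mem_Icc.mp hi
        exact ha i (Finset.mem_Icc.mpr ⟨hi'.1, by omega⟩))
    rw [e1, e2]
    exact partial_le N hN (fun i => max (Real.logb 2 (eta * γSR i)) 0)
      (fun i => max (Real.logb 2 (xi * γRD i)) 0)
      (fun i _ => le_max_right _ _) (fun i _ => le_max_right _ _)
      hamono hbmono hmatch n hn
  · rw [Finset.sum_congr rfl hb]
    exact hmatch
end

section
/- (Relaxation equivalence, Lemma 3) Suppose γ_SR non-increasing and γ_RD non-decreasing. Let R_s*[n] be the classic water-filling rates of the source with budget E_s (hence non-increasing in n). Then the optimal solution of the relaxed relay problem (which keeps only the causality constraint at n = N) given by water-filling with budget Ê_r also satisfies all intermediate causality constraints ∑_{i=2}^n R_r*[i] ≤ ∑_{i=1}^{n−1} R_s*[i] for n = 2,…,N−1; hence the relaxed and unrelaxed problems have the same optimal value. -/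
/-- Averaging lemma: for a non-decreasing sequence, the prefix sum times the
total cardinality is at most the prefix cardinality times the total sum. -/
lemma avg_mono (a m b : ℕ) (f : ℕ → ℝ) (ham : a ≤ m) (hmb : m ≤ b)
    (hmono : ∀ i ∈ Finset.Icc a b, ∀ j ∈ Finset.Icc a b, i ≤ j → f i ≤ f j) :
    ((b - a + 1 : ℕ) : ℝ) * ∑ i ∈ Finset.Icc a m, f i ≤
    ((m - a + 1 : ℕ) : ℝ) * ∑ i ∈ Finset.Icc a b, f i := by
  have hdisj : Disjoint (Finset.Icc a m) (Finset.Ioc m b) := by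
    rw [Finset.disjoint_left]
    intro i h1 h2
    simp only [Finset.mem_Icc, Finset.mem_Ioc] at h1 h2
    omega
  have hsplit : Finset.Icc a m ∪ Finset.Ioc m b = Finset.Icc a b := by
    ext x
    simp only [Finset.mem_union, Finset.mem_Icc, Finset.mem_Ioc]
    omega
  have hsum : ∑ i ∈ Finset.Icc a b, f i
      = (∑ i ∈ Finset.Icc a m, f i) + ∑ i ∈ Finset.Ioc m b, f i := by
    rw [← hsplit, Finset.sum_union hdisj]
  set P := ∑ i ∈ Finset.Icc a m, f i with hP
  set T := ∑ i ∈ Finset.Ioc m b, f i with hT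
  have hPle : ∀ i ∈ Finset.Ioc m b, P ≤ ((m - a + 1 : ℕ) : ℝ) * f i := by
    intro i hi
    have hi' : i ∈ Finset.Icc a b := by
      simp only [Finset.mem_Ioc] at hi
      simp only [Finset.mem_Icc]
      omega
    have h1 : P ≤ ∑ _j ∈ Finset.Icc a m, f i := by
      apply Finset.sum_le_sum
      intro j hj
      have hj' : j ∈ Finset.Icc a b := by
        simp only [Finset.mem_Icc] at hj ⊢; omega
      exact hmono j hj' i hi' (by
        simp only [Finset.mem_Icc] at hj
        simp only [Finset.mem_Ioc] at hi
        omega)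
    have h2 : ∑ _j ∈ Finset.Icc a m, f i = ((m - a + 1 : ℕ) : ℝ) * f i := by
      rw [Finset.sum_const, Nat.card_Icc, nsmul_eq_mul]
      congr 2
      omega
    linarith
  have hTP : ((b - m : ℕ) : ℝ) * P ≤ ((m - a + 1 : ℕ) : ℝ) * T := by
    have := Finset.sum_le_sum hPle
    rw [Finset.sum_const, Nat.card_Ioc, nsmul_eq_mul] at this
    calc ((b - m : ℕ) : ℝ) * P ≤ ∑ i ∈ Finset.Ioc m b, ((m - a + 1 : ℕ) : ℝ) * f i := this
      _ = ((m - a + 1 : ℕ) : ℝ) * T := by rw [← Finset.mul_sum]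
  have hcast : ((b - a + 1 : ℕ) : ℝ) = ((m - a + 1 : ℕ) : ℝ) + ((b - m : ℕ) : ℝ) := by
    have : (b - a + 1 : ℕ) = (m - a + 1) + (b - m) := by omega
    rw [this, Nat.cast_add]
  rw [hsum, hcast]
  nlinarith [hTP]

/-- Lemma 3 (relaxation equivalence): with `γ_SR` non-increasing and `γ_RD`
non-decreasing, let `Rs*` be the source water-filling rates with budget `E_s`
and let relay water-filling with budget `Ê_r` (water level ξ) be optimal for the
relaxed problem that keeps only the total (n = N) causality constraint. Then
this solution also satisfies all intermediate causality constraints, and the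
relaxed and unrelaxed problems have the same optimal value. -/

theorem stmt_15 (N : ℕ) (hN : 2 ≤ N) (γSR γRD : ℕ → ℝ)
    (hSR0 : ∀ n ∈ Finset.Icc 1 (N - 1), 0 < γSR n)
    (hRD0 : ∀ n ∈ Finset.Icc 2 N, 0 < γRD n)
    (hSR : ∀ m ∈ Finset.Icc 1 (N - 1), ∀ n ∈ Finset.Icc 1 (N - 1), m ≤ n → γSR n ≤ γSR m)
    (hRD : ∀ m ∈ Finset.Icc 2 N, ∀ n ∈ Finset.Icc 2 N, m ≤ n → γRD m ≤ γRD n)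
    (Es Er : ℝ) (hEs : 0 < Es) (hEr : 0 < Er)
    (eta xi Ehatr : ℝ) (heta : 0 < eta) (hxi : 0 ≤ xi)
    (hEhat0 : 0 ≤ Ehatr) (hEhat1 : Ehatr ≤ Er)
    (hWFs : (∑ n ∈ Finset.Icc 1 (N - 1), max (eta - 1 / γSR n) 0) = Es)
    (hWFr : (∑ n ∈ Finset.Icc 2 N, max (xi - 1 / γRD n) 0) = Ehatr)
    (hopt : IsGreatest {v : ℝ | ∃ pr : ℕ → ℝ,
        (∀ n ∈ Finset.Icc 2 N, 0 ≤ pr n) ∧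
        (∑ n ∈ Finset.Icc 2 N, pr n) ≤ Er ∧
        (∑ n ∈ Finset.Icc 2 N, Real.logb 2 (1 + pr n * γRD n)) ≤
          ∑ n ∈ Finset.Icc 1 (N - 1), max (Real.logb 2 (eta * γSR n)) 0 ∧
        v = ∑ n ∈ Finset.Icc 2 N, Real.logb 2 (1 + pr n * γRD n)}
      (∑ n ∈ Finset.Icc 2 N, max (Real.logb 2 (xi * γRD n)) 0)) :
    (∀ n ∈ Finset.Icc 2 N,
      (∑ i ∈ Finset.Icc 2 n, max (Real.logb 2 (xi * γRD i)) 0) ≤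
        ∑ i ∈ Finset.Icc 1 (n - 1), max (Real.logb 2 (eta * γSR i)) 0) ∧
    sSup {v : ℝ | ∃ pr : ℕ → ℝ,
        (∀ n ∈ Finset.Icc 2 N, 0 ≤ pr n) ∧
        (∑ n ∈ Finset.Icc 2 N, pr n) ≤ Er ∧
        (∑ n ∈ Finset.Icc 2 N, Real.logb 2 (1 + pr n * γRD n)) ≤
          ∑ n ∈ Finset.Icc 1 (N - 1), max (Real.logb 2 (eta * γSR n)) 0 ∧
        v = ∑ n ∈ Finset.Icc 2 N, Real.logb 2 (1 + pr n * γRD n)} =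
      sSup {v : ℝ | ∃ pr : ℕ → ℝ,
        (∀ n ∈ Finset.Icc 2 N, 0 ≤ pr n) ∧
        (∑ n ∈ Finset.Icc 2 N, pr n) ≤ Er ∧
        (∀ n ∈ Finset.Icc 2 N,
          (∑ i ∈ Finset.Icc 2 n, Real.logb 2 (1 + pr i * γRD i)) ≤
            ∑ i ∈ Finset.Icc 1 (n - 1), max (Real.logb 2 (eta * γSR i)) 0) ∧
        v = ∑ n ∈ Finset.Icc 2 N, Real.logb 2 (1 + pr n * γRD n)} := by
  have hNmem : N ∈ Finset.Icc 2 N := Finset.mem_Icc.mpr ⟨hN, le_rfl⟩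
  -- monotonicity of relay rates
  have hRrmono : ∀ i ∈ Finset.Icc 2 N, ∀ j ∈ Finset.Icc 2 N, i ≤ j →
      max (Real.logb 2 (xi * γRD i)) 0 ≤ max (Real.logb 2 (xi * γRD j)) 0 := by
    intro i hi j hj hij
    rcases eq_or_lt_of_le hxi with h0 | h0
    · simp [← h0]
    · have h1 : 0 < xi * γRD i := mul_pos h0 (hRD0 i hi)
      have h2 : xi * γRD i ≤ xi * γRD j := by
        have := hRD i hi j hj hij
        nlinarith
      exact max_le_max (Real.logb_le_logb_of_le one_lt_two h1 h2) le_rfl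
  -- antitonicity of source rates (stated for the negation)
  have hRsanti : ∀ i ∈ Finset.Icc 1 (N - 1), ∀ j ∈ Finset.Icc 1 (N - 1), i ≤ j →
      -(max (Real.logb 2 (eta * γSR i)) 0) ≤ -(max (Real.logb 2 (eta * γSR j)) 0) := by
    intro i hi j hj hij
    have h1 : 0 < eta * γSR j := mul_pos heta (hSR0 j hj)
    have h2 : eta * γSR j ≤ eta * γSR i := by
      have := hSR i hi j hj hij
      nlinarith
    exact neg_le_neg (max_le_max (Real.logb_le_logb_of_le one_lt_two h1 h2) le_rfl)
  -- total causality constraint, from feasibility of the water-filling point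
  have htot : (∑ n ∈ Finset.Icc 2 N, max (Real.logb 2 (xi * γRD n)) 0) ≤
      ∑ n ∈ Finset.Icc 1 (N - 1), max (Real.logb 2 (eta * γSR n)) 0 := by
    obtain ⟨pr, _, _, h2, h3⟩ := hopt.1
    rw [h3]
    exact h2
  -- Part 1: all intermediate causality constraints
  have part1 : ∀ n ∈ Finset.Icc 2 N,
      (∑ i ∈ Finset.Icc 2 n, max (Real.logb 2 (xi * γRD i)) 0) ≤
        ∑ i ∈ Finset.Icc 1 (n - 1), max (Real.logb 2 (eta * γSR i)) 0 := by
    intro n hn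
    obtain ⟨hn2, hnN⟩ := Finset.mem_Icc.mp hn
    have hr := avg_mono 2 n N (fun i => max (Real.logb 2 (xi * γRD i)) 0) hn2 hnN hRrmono
    have hs := avg_mono 1 (n - 1) (N - 1)
      (fun i => -(max (Real.logb 2 (eta * γSR i)) 0)) (by omega) (by omega) hRsanti
    have c1 : (N - 2 + 1 : ℕ) = N - 1 := by omega
    have c2 : (n - 2 + 1 : ℕ) = n - 1 := by omega
    have c3 : (N - 1 - 1 + 1 : ℕ) = N - 1 := by omega
    have c4 : (n - 1 - 1 + 1 : ℕ) = n - 1 := by omega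
    rw [c1, c2] at hr
    rw [c3, c4, Finset.sum_neg_distrib, Finset.sum_neg_distrib, mul_neg, mul_neg,
      neg_le_neg_iff] at hs
    have hmid : ((n - 1 : ℕ) : ℝ) * (∑ i ∈ Finset.Icc 2 N, max (Real.logb 2 (xi * γRD i)) 0)
        ≤ ((n - 1 : ℕ) : ℝ) * ∑ i ∈ Finset.Icc 1 (N - 1), max (Real.logb 2 (eta * γSR i)) 0 :=
      mul_le_mul_of_nonneg_left htot (Nat.cast_nonneg _)
    have hNpos : (0 : ℝ) < ((N - 1 : ℕ) : ℝ) := by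
      exact_mod_cast Nat.pos_of_ne_zero (by omega)
    have hchain : ((N - 1 : ℕ) : ℝ) * (∑ i ∈ Finset.Icc 2 n, max (Real.logb 2 (xi * γRD i)) 0)
        ≤ ((N - 1 : ℕ) : ℝ) * ∑ i ∈ Finset.Icc 1 (n - 1), max (Real.logb 2 (eta * γSR i)) 0 := by
      calc ((N - 1 : ℕ) : ℝ) * (∑ i ∈ Finset.Icc 2 n, max (Real.logb 2 (xi * γRD i)) 0)
          ≤ ((n - 1 : ℕ) : ℝ) * ∑ i ∈ Finset.Icc 2 N, max (Real.logb 2 (xi * γRD i)) 0 := hr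
        _ ≤ ((n - 1 : ℕ) : ℝ) * ∑ i ∈ Finset.Icc 1 (N - 1), max (Real.logb 2 (eta * γSR i)) 0 :=
            hmid
        _ ≤ ((N - 1 : ℕ) : ℝ) * ∑ i ∈ Finset.Icc 1 (n - 1), max (Real.logb 2 (eta * γSR i)) 0 :=
            hs
    exact le_of_mul_le_mul_left hchain hNpos
  refine ⟨part1, ?_⟩
  -- the water-filling power allocation
  set pr0 : ℕ → ℝ := fun n => max (xi - 1 / γRD n) 0 with hpr0
  have hkey : ∀ n ∈ Finset.Icc 2 N,
      Real.logb 2 (1 + pr0 n * γRD n) = max (Real.logb 2 (xi * γRD n)) 0 := by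
    intro n hn
    have hγ := hRD0 n hn
    rcases le_or_gt (1 / γRD n) xi with h | h
    · have hp : pr0 n = xi - 1 / γRD n := max_eq_left (by linarith)
      have h1 : 1 + pr0 n * γRD n = xi * γRD n := by
        rw [hp]
        field_simp
        ring
      have h2 : 1 ≤ xi * γRD n := by
        rw [div_le_iff₀ hγ] at h
        linarith
      rw [h1, max_eq_left (Real.logb_nonneg one_lt_two h2)]
    · have hp : pr0 n = 0 := max_eq_right (by linarith)
      have h1 : (1 : ℝ) + pr0 n * γRD n = 1 := by rw [hp]; ring
      have h2 : xi * γRD n ≤ 1 := by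
        rw [lt_div_iff₀ hγ] at h
        linarith
      rw [h1, Real.logb_one]
      exact (max_eq_right (Real.logb_nonpos one_lt_two (by positivity) h2)).symm
  set v0 : ℝ := ∑ n ∈ Finset.Icc 2 N, max (Real.logb 2 (xi * γRD n)) 0 with hv0
  -- v0 is feasible for the unrelaxed problem
  have hmem : v0 ∈ {v : ℝ | ∃ pr : ℕ → ℝ,
      (∀ n ∈ Finset.Icc 2 N, 0 ≤ pr n) ∧
      (∑ n ∈ Finset.Icc 2 N, pr n) ≤ Er ∧
      (∀ n ∈ Finset.Icc 2 N,
        (∑ i ∈ Finset.Icc 2 n, Real.logb 2 (1 + pr i * γRD i)) ≤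
          ∑ i ∈ Finset.Icc 1 (n - 1), max (Real.logb 2 (eta * γSR i)) 0) ∧
      v = ∑ n ∈ Finset.Icc 2 N, Real.logb 2 (1 + pr n * γRD n)} := by
    refine ⟨pr0, fun n _ => le_max_right _ _, ?_, ?_, ?_⟩
    · rw [hpr0]
      simp only
      rw [hWFr]
      exact hEhat1
    · intro n hn
      have hnN := (Finset.mem_Icc.mp hn).2
      have hsub : ∀ i ∈ Finset.Icc 2 n, i ∈ Finset.Icc 2 N := by
        intro i hi
        simp only [Finset.mem_Icc] at hi ⊢
        omega
      rw [Finset.sum_congr rfl (fun i hi => hkey i (hsub i hi))]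
      exact part1 n hn
    · exact (Finset.sum_congr rfl (fun n hn => (hkey n hn).symm))
  -- v0 is an upper bound for the unrelaxed problem (via the relaxed one)
  have hub : ∀ v ∈ {v : ℝ | ∃ pr : ℕ → ℝ,
      (∀ n ∈ Finset.Icc 2 N, 0 ≤ pr n) ∧
      (∑ n ∈ Finset.Icc 2 N, pr n) ≤ Er ∧
      (∀ n ∈ Finset.Icc 2 N,
        (∑ i ∈ Finset.Icc 2 n, Real.logb 2 (1 + pr i * γRD i)) ≤
          ∑ i ∈ Finset.Icc 1 (n - 1), max (Real.logb 2 (eta * γSR i)) 0) ∧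
      v = ∑ n ∈ Finset.Icc 2 N, Real.logb 2 (1 + pr n * γRD n)}, v ≤ v0 := by
    rintro v ⟨pr, h0, h1, h2, h3⟩
    exact hopt.2 ⟨pr, h0, h1, h2 N hNmem, h3⟩
  rw [hopt.csSup_eq, (IsGreatest.csSup_eq ⟨hmem, hub⟩)]
end
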